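/- arXiv:1807.04496 — 2 statements merged into one kernel-verified Lean document; each statement's English description precedes it below -/
import Mathlib

section
/- Let g be a homogeneous degree-k polynomial computed by a commutative circuit C, let ĝ be the polynomial computed by the noncommutative version C^{nc}, and let f be any homogeneous degree-k polynomial with symmetrization f*. Then for any point a ∈ F^n, the scaled Hadamard product satisfies (f ∘^s g)(a) = (f* ∘ ĝ)(a), where on the right the noncommutative Hadamard product is evaluated by substituting a_i for y_i. -/
open Finset

namespace Stmt6Aux

variable {n k : ℕ}

noncomputable def M (w : Fin k → Fin n) : Fin n →₀ ℕ := ∑ j : Fin k, Finsupp.single (w j) 1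

lemma M_apply (w : Fin k → Fin n) (i : Fin n) :
    M w i = (univ.filter (fun j => w j = i)).card := by
  rw [Finset.card_filter]
  simp [M, Finsupp.single_apply, Finsupp.finset_sum_apply]

lemma M_comp (w : Fin k → Fin n) (σ : Equiv.Perm (Fin k)) : M (w ∘ σ) = M w := by
  simpa [M] using Equiv.sum_comp σ (fun j => Finsupp.single (w j) (1:ℕ))

lemma exists_comp (w w' : Fin k → Fin n) (h : M w' = M w) :
    ∃ σ : Equiv.Perm (Fin k), w ∘ σ = w' := by
  have hcard : ∀ i, Fintype.card {j // w' j = i} = Fintype.card {j // w j = i} := by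
    intro i
    simp only [Fintype.card_subtype]
    have := congrArg (fun m : Fin n →₀ ℕ => m i) h
    simpa [M_apply] using this
  let e : ∀ i, {j // w' j = i} ≃ {j // w j = i} := fun i => Fintype.equivOfCardEq (hcard i)
  refine ⟨(Equiv.sigmaFiberEquiv w').symm.trans
    ((Equiv.sigmaCongrRight e).trans (Equiv.sigmaFiberEquiv w)), funext fun j => ?_⟩
  exact (e (w' j) ⟨j, rfl⟩).prop

lemma card_fix (w : Fin k → Fin n) :
    (univ.filter (fun σ : Equiv.Perm (Fin k) => w ∘ σ = w)).card
      = ∏ i, Nat.factorial (M w i) := by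
  rw [← Fintype.card_subtype, DomMulAct.stabilizer_card w]
  refine Finset.prod_congr rfl fun i _ => ?_
  rw [Fintype.card_subtype, ← M_apply]

lemma card_fiber (w w' : Fin k → Fin n) (h : M w' = M w) :
    (univ.filter (fun σ : Equiv.Perm (Fin k) => w ∘ σ = w')).card
      = ∏ i, Nat.factorial (M w i) := by
  obtain ⟨τ, hτ⟩ := exists_comp w w' h
  rw [← card_fix w]
  refine Finset.card_bij' (fun σ _ => σ * τ⁻¹) (fun σ _ => σ * τ) ?_ ?_ ?_ ?_
  · intro σ hσ
    simp only [mem_filter, mem_univ, true_and] at hσ ⊢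
    funext j
    have := congrFun hσ (τ⁻¹ j)
    simpa [Function.comp, ← hτ] using this
  · intro σ hσ
    simp only [mem_filter, mem_univ, true_and] at hσ ⊢
    funext j
    have := congrFun hσ (τ j)
    simpa [Function.comp, ← hτ] using this
  · intro σ _; simp [mul_assoc]
  · intro σ _; simp [mul_assoc]

variable {F : Type*} [Field F]

lemma sum_perm (w : Fin k → Fin n) (fhat : (Fin k → Fin n) → F) :
    ∑ σ : Equiv.Perm (Fin k), fhat (w ∘ σ)
      = (↑(∏ i, Nat.factorial (M w i)) : F)
        * ∑ w' ∈ univ.filter (fun w' => M w' = M w), fhat w' := by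
  have himg : (univ : Finset (Equiv.Perm (Fin k))).image
      (fun σ : Equiv.Perm (Fin k) => w ∘ ⇑σ) = univ.filter (fun w' => M w' = M w) := by
    ext w'
    simp only [mem_image, mem_univ, true_and, mem_filter]
    constructor
    · rintro ⟨σ, rfl⟩; exact M_comp w σ
    · exact exists_comp w w'
  rw [Finset.sum_comp fhat (fun σ : Equiv.Perm (Fin k) => w ∘ ⇑σ), himg, Finset.mul_sum]
  refine Finset.sum_congr rfl fun w' hw' => ?_
  rw [mem_filter] at hw'
  rw [card_fiber w w' hw'.2, nsmul_eq_mul]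

lemma prod_pow (w : Fin k → Fin n) (a : Fin n → F) :
    ∏ j : Fin k, a (w j) = ∏ i : Fin n, a i ^ (M w i) := by
  rw [Finset.prod_comp a w]
  rw [Finset.prod_subset (Finset.subset_univ (univ.image w))]
  · refine Finset.prod_congr rfl fun i _ => ?_
    congr 1
    rw [Finset.card_filter]
    simp [M, Finsupp.single_apply, Finsupp.finset_sum_apply]
  · intro i _ hi
    have hji : ∀ j, w j ≠ i := fun j hj => hi (hj ▸ Finset.mem_image_of_mem w (mem_univ j))
    have : (univ.filter (fun j : Fin k => w j = i)) = ∅ :=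
      Finset.filter_eq_empty_iff.mpr (fun {j} _ => hji j)
    rw [this, Finset.card_empty, pow_zero]

end Stmt6Aux

open Stmt6Aux in
/-- The scaled Hadamard product evaluated at a point equals the noncommutative
Hadamard product of `f*` and `ĝ` evaluated at that point:
`(f ∘ˢ g)(a) = (f* ∘ ĝ)(a)`. Words of degree `k` are functions `Fin k → Fin n`,
and `fhat`, `ghat` are noncommutative lifts of `f` and `g` respectively. -/
theorem stmt_6 (F : Type*) [Field F] (n k : ℕ)
    (f g : MvPolynomial (Fin n) F)
    (hf : f.IsHomogeneous k) (hg : g.IsHomogeneous k)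
    (fhat ghat : (Fin k → Fin n) → F)
    (hflift : ∀ m : Fin n →₀ ℕ,
      f.coeff m = ∑ w ∈ Finset.univ.filter
        (fun w : Fin k → Fin n => (∑ j : Fin k, Finsupp.single (w j) 1) = m), fhat w)
    (hglift : ∀ m : Fin n →₀ ℕ,
      g.coeff m = ∑ w ∈ Finset.univ.filter
        (fun w : Fin k → Fin n => (∑ j : Fin k, Finsupp.single (w j) 1) = m), ghat w)
    (a : Fin n → F) :
    (∑ m ∈ f.support,
        (↑(∏ i : Fin n, (m i).factorial) * f.coeff m * g.coeff m) * ∏ i : Fin n, a i ^ m i)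
      = ∑ w : Fin k → Fin n,
          (∑ σ : Equiv.Perm (Fin k), fhat (w ∘ σ)) * ghat w * ∏ j : Fin k, a (w j) := by
  classical
  have hf' : ∀ m : Fin n →₀ ℕ,
      f.coeff m = ∑ w ∈ Finset.univ.filter (fun w : Fin k → Fin n => M w = m), fhat w :=
    hflift
  have hg' : ∀ m : Fin n →₀ ℕ,
      g.coeff m = ∑ w ∈ Finset.univ.filter (fun w : Fin k → Fin n => M w = m), ghat w :=
    hglift
  set C : (Fin n →₀ ℕ) → F :=
    fun m => (↑(∏ i : Fin n, (m i).factorial) : F) * f.coeff m * ∏ i : Fin n, a i ^ m i with hC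
  -- rewrite each RHS summand
  have step1 : ∀ w : Fin k → Fin n,
      (∑ σ : Equiv.Perm (Fin k), fhat (w ∘ σ)) * ghat w * ∏ j : Fin k, a (w j)
        = C (M w) * ghat w := by
    intro w
    rw [sum_perm w fhat, ← hf' (M w), prod_pow w a, hC]
    ring
  -- group the RHS by monomial
  have step2 : ∑ w : Fin k → Fin n, C (M w) * ghat w
      = ∑ m ∈ (univ : Finset (Fin k → Fin n)).image M, C m * g.coeff m := by
    rw [← Finset.sum_fiberwise_of_maps_to
      (fun w _ => Finset.mem_image_of_mem M (mem_univ w)) (fun w => C (M w) * ghat w)]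
    refine Finset.sum_congr rfl fun m hm => ?_
    rw [hg' m, Finset.mul_sum]
    exact Finset.sum_congr rfl fun w hw => by rw [(mem_filter.mp hw).2]
  -- transfer the sum from the support of f to the image of M
  have key : ∑ m ∈ f.support, C m * g.coeff m
      = ∑ m ∈ (univ : Finset (Fin k → Fin n)).image M, C m * g.coeff m := by
    rw [Finset.sum_subset
        (Finset.subset_union_left : f.support ⊆ f.support ∪ (univ.image M)) ?h1,
      Finset.sum_subset
        (Finset.subset_union_right : (univ.image M) ⊆ f.support ∪ (univ.image M)) ?h2]
    case h1 =>
      intro m _ hm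
      have hc : f.coeff m = 0 := by rwa [← MvPolynomial.notMem_support_iff]
      simp [hC, hc]
    case h2 =>
      intro m _ hm
      have hemp : univ.filter (fun w : Fin k → Fin n => M w = m) = ∅ :=
        Finset.filter_eq_empty_iff.mpr
          (fun {w} _ h => hm (h ▸ Finset.mem_image_of_mem M (mem_univ w)))
      have hc : g.coeff m = 0 := by rw [hg' m, hemp, Finset.sum_empty]
      simp [hc]
  calc ∑ m ∈ f.support,
        (↑(∏ i : Fin n, (m i).factorial) * f.coeff m * g.coeff m) * ∏ i : Fin n, a i ^ m i
      = ∑ m ∈ f.support, C m * g.coeff m := by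
        refine Finset.sum_congr rfl fun m _ => ?_; rw [hC]; ring
    _ = ∑ m ∈ (univ : Finset (Fin k → Fin n)).image M, C m * g.coeff m := key
    _ = ∑ w : Fin k → Fin n, C (M w) * ghat w := step2.symm
    _ = ∑ w : Fin k → Fin n,
          (∑ σ : Equiv.Perm (Fin k), fhat (w ∘ σ)) * ghat w * ∏ j : Fin k, a (w j) :=
        Finset.sum_congr rfl fun w _ => (step1 w).symm
end

section
/- Let f, g ∈ F⟨y_1,...,y_n⟩ be homogeneous noncommutative polynomials of degree k, and suppose g = (M_1 M_2 ··· M_k)(1,w) for w×w matrices M_i of homogeneous linear forms (an ABP). Define, for each i ∈ [n], the (k+1)w × (k+1)w block superdiagonal matrix A_i whose (j, j+1) block is the scalar matrix [y_i]M_j for 1 ≤ j ≤ k and all other blocks zero. Then (f ∘ g)(1,1,...,1) = (f(A_1,...,A_n))(1, (k+1)w), where ∘ is the word-wise Hadamard product. -/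
lemma abp_aux (F : Type*) [Field F] (n k d : ℕ)
    (Mc : Fin k → Fin n → Matrix (Fin d) (Fin d) F)
    (A : Fin n → Matrix (Fin (k + 1) × Fin d) (Fin (k + 1) × Fin d) F)
    (hA : ∀ (i : Fin n) (p q : Fin (k + 1)) (r s : Fin d),
      A i (p, r) (q, s) =
        if h : (q : ℕ) = (p : ℕ) + 1 ∧ (p : ℕ) < k
          then Mc ⟨(p : ℕ), h.2⟩ i r s else 0)
    (w : Fin k → Fin n) :
    ∀ (t : ℕ) (ht : t ≤ k) (q : Fin (k+1)) (r s : Fin d),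
      (List.ofFn fun j : Fin t => A (w ⟨j, lt_of_lt_of_le j.2 ht⟩)).prod (⟨0, by omega⟩, r) (q, s)
      = if (q : ℕ) = t then
          (List.ofFn fun j : Fin t => Mc ⟨j, lt_of_lt_of_le j.2 ht⟩ (w ⟨j, lt_of_lt_of_le j.2 ht⟩)).prod r s
        else 0 := by
  intro t
  induction t with
  | zero =>
    intro ht q r s
    simp only [List.ofFn_zero, List.prod_nil, Matrix.one_apply, Prod.ext_iff, Fin.ext_iff]
    by_cases h1 : (q : ℕ) = 0 <;> by_cases h2 : (r : ℕ) = (s : ℕ) <;> simp [h1, h2] <;> omega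
  | succ t ih =>
    intro ht q r s
    have ht' : t ≤ k := by omega
    rw [List.ofFn_succ', List.prod_concat, Matrix.mul_apply, Fintype.sum_prod_type]
    have hP : ∀ (p' : Fin (k+1)) (r' : Fin d),
        (List.ofFn fun j : Fin t => A (w ⟨(j.castSucc : ℕ), lt_of_lt_of_le j.castSucc.2 ht⟩)).prod
          (⟨0, by omega⟩, r) (p', r')
        = if (p' : ℕ) = t then
            (List.ofFn fun j : Fin t => Mc ⟨j, lt_of_lt_of_le j.2 ht'⟩ (w ⟨j, lt_of_lt_of_le j.2 ht'⟩)).prod r r'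
          else 0 := fun p' r' => ih ht' p' r r'
    simp only [hP, hA]
    rw [Finset.sum_eq_single (⟨t, by omega⟩ : Fin (k+1))]
    · simp only [if_pos rfl]
      rw [List.ofFn_succ', List.prod_concat, Matrix.mul_apply]
      by_cases hq : (q : ℕ) = t + 1
      · rw [if_pos hq]
        apply Finset.sum_congr rfl
        intro r' _
        rw [dif_pos ⟨hq, by omega⟩]
        congr 1
      · rw [if_neg hq]
        apply Finset.sum_eq_zero
        intro r' _
        rw [dif_neg (by rintro ⟨h1, h2⟩; exact hq (by simpa using h1))]
        ring
    · intro p' _ hp'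
      apply Finset.sum_eq_zero
      intro r' _
      rw [if_neg (by simp [Fin.ext_iff] at hp'; omega)]
      ring
    · intro h
      exact absurd (Finset.mem_univ _) h

/-- Hadamard product via ABP block matrices: if `g` is computed by an ABP
`g(w) = (M_1⋯M_k)(1,d)` (here `Mc j i = [y_i]M_j` is the coefficient matrix),
and `A i` is the block superdiagonal matrix with `(j, j+1)` block `[y_i]M_j`,
then `(f ∘ g)(1,…,1) = (f(A_1,…,A_n))(1, (k+1)d)`, where `f` and `g` are
(coefficient functions of) homogeneous degree-`k` noncommutative polynomials. -/
theorem stmt_16 (F : Type*) [Field F] (n k d : ℕ) (hd : 0 < d)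
    (f g : (Fin k → Fin n) → F)
    (Mc : Fin k → Fin n → Matrix (Fin d) (Fin d) F)
    (hg : ∀ w : Fin k → Fin n,
      g w = ((List.ofFn fun j : Fin k => Mc j (w j)).prod) ⟨0, hd⟩ ⟨d - 1, by omega⟩)
    (A : Fin n → Matrix (Fin (k + 1) × Fin d) (Fin (k + 1) × Fin d) F)
    (hA : ∀ (i : Fin n) (p q : Fin (k + 1)) (r s : Fin d),
      A i (p, r) (q, s) =
        if h : (q : ℕ) = (p : ℕ) + 1 ∧ (p : ℕ) < k
          then Mc ⟨(p : ℕ), h.2⟩ i r s else 0) :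
    (∑ w : Fin k → Fin n, f w * g w)
      = (∑ w : Fin k → Fin n, f w • (List.ofFn fun j : Fin k => A (w j)).prod)
          (0, ⟨0, hd⟩) (Fin.last k, ⟨d - 1, by omega⟩) := by
  rw [Matrix.sum_apply]
  apply Finset.sum_congr rfl
  intro w _
  rw [Matrix.smul_apply, smul_eq_mul, hg w]
  congr 1
  have := abp_aux F n k d Mc A hA w k le_rfl (Fin.last k) ⟨0, hd⟩ ⟨d - 1, by omega⟩
  simp only [Fin.val_last, if_true, ite_true, Fin.eta] at this
  have h0 : (0 : Fin (k+1)) = ⟨0, by omega⟩ := rfl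
  rw [h0]
  exact this.symm
end
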